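/- Let (C, S, W) be a category with strong and weak equivalences, M a full subcategory of C. Suppose (i) for every w : Y → X in W and every f ∈ C(M, X) with M an object of M, there exists g ∈ C[S⁻¹](M, Y) with w∘g = f in C[S⁻¹]; (ii) for every w : Y → X in W and M in M, the map w_* : C[S⁻¹](M, Y) → C[S⁻¹](M, X) is injective; (iii) for every object X of C there is a morphism ε : M → X in W with M in M. Then every object of M is cofibrant, (C, S, W) is a left Cartan-Eilenberg category, and M[S⁻¹, C] → C[W⁻¹] is an equivalence of categories. -/

import Mathlib

open CategoryTheory

universe v u

variable {C : Type u} [Category.{v} C]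

/-- `(C, S, W)` is a category with strong and weak equivalences. -/
structure StrongWeak (S W : MorphismProperty C) : Prop where
  comp_S : ∀ ⦃X Y Z : C⦄ (f : X ⟶ Y) (g : Y ⟶ Z), S f → S g → S (f ≫ g)
  comp_W : ∀ ⦃X Y Z : C⦄ (f : X ⟶ Y) (g : Y ⟶ Z), W f → W g → W (f ≫ g)
  iso_S : ∀ ⦃X Y : C⦄ (f : X ⟶ Y), IsIso f → S f
  iso_W : ∀ ⦃X Y : C⦄ (f : X ⟶ Y), IsIso f → W f
  le_sat : ∀ ⦃X Y : C⦄ (f : X ⟶ Y), S f → IsIso (W.Q.map f)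

/-- An object `M` is `(S, W)`-cofibrant. -/
def Cofibrant (S W : MorphismProperty C) (M : C) : Prop :=
  ∀ ⦃Y X : C⦄ (w : Y ⟶ X), W w →
    Function.Bijective (fun g : S.Q.obj M ⟶ S.Q.obj Y => g ≫ S.Q.map w)

/-- The canonical functor `γ' : C[S⁻¹] ⥤ C[W⁻¹]`. -/
noncomputable def gammaPrime (S W : MorphismProperty C)
    (h : ∀ ⦃X Y : C⦄ (f : X ⟶ Y), S f → IsIso (W.Q.map f)) :
    S.Localization ⥤ W.Localization :=
  Localization.Construction.lift W.Q (fun _ _ f hf => h f hf)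

/-- `(C, S, W)` is a left Cartan-Eilenberg category. -/
def LeftCE (S W : MorphismProperty C)
    (h : ∀ ⦃X Y : C⦄ (f : X ⟶ Y), S f → IsIso (W.Q.map f)) : Prop :=
  ∀ X : C, ∃ (M : C) (ε : S.Q.obj M ⟶ S.Q.obj X),
    Cofibrant S W M ∧ IsIso ((gammaPrime S W h).map ε)

section Aux

open Localization.Construction

/-- `β` can be lifted along every weak equivalence into its target. -/
def LiftP (S W : MorphismProperty C) {M c : C} (β : S.Q.obj M ⟶ S.Q.obj c) : Prop :=
  ∀ ⦃Y : C⦄ (w : Y ⟶ c), W w → ∃ g : S.Q.obj M ⟶ S.Q.obj Y, g ≫ S.Q.map w = β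

lemma gmap (S W : MorphismProperty C)
    (h : ∀ ⦃X Y : C⦄ (f : X ⟶ Y), S f → IsIso (W.Q.map f)) {X Y : C} (f : X ⟶ Y) :
    (gammaPrime S W h).map (S.Q.map f) = W.Q.map f := rfl

variable (S W : MorphismProperty C) (hsw : StrongWeak S W) (P : C → Prop)

/-- Key surjectivity lemma (Lemma L). -/
lemma lemL
    (h1 : ∀ ⦃Y X : C⦄ (w : Y ⟶ X), W w → ∀ (M : C), P M → ∀ f : M ⟶ X,
      ∃ g : S.Q.obj M ⟶ S.Q.obj Y, g ≫ S.Q.map w = S.Q.map f)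
    (h2 : ∀ ⦃Y X : C⦄ (w : Y ⟶ X), W w → ∀ (M : C), P M →
      Function.Injective (fun g : S.Q.obj M ⟶ S.Q.obj Y => g ≫ S.Q.map w))
    (h3 : ∀ X : C, ∃ (M : C) (ε : M ⟶ X), P M ∧ W ε)
    (M : C) (hM : P M) (X : C) (ψ : W.Q.obj M ⟶ W.Q.obj X) :
    ∃ β : S.Q.obj M ⟶ S.Q.obj X,
      LiftP S W β ∧ (gammaPrime S W hsw.le_sat).map β = ψ := by
  set γ := gammaPrime S W hsw.le_sat with hγ
  let P₀ : MorphismProperty W.Localization := fun A B ψ' =>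
    ∀ (a b : C) (ha : W.Q.obj a = A) (hb : W.Q.obj b = B)
      (M' : C), P M' → ∀ α : S.Q.obj M' ⟶ S.Q.obj a, LiftP S W α →
      ∃ β : S.Q.obj M' ⟶ S.Q.obj b, LiftP S W β ∧
        γ.map β = γ.map α ≫ eqToHom ha ≫ ψ' ≫ eqToHom hb.symm
  have instU : P₀.IsStableUnderComposition := by
    constructor
    intro A B B' ψ₁ ψ₂ hψ₁ hψ₂ a b' ha hb' M' hM' α hα
    have hcB : W.Q.obj ((objEquiv W).symm B) = B := (objEquiv W).right_inv B
    obtain ⟨β₁, hβ₁L, hβ₁⟩ := hψ₁ a _ ha hcB M' hM' α hα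
    obtain ⟨β₂, hβ₂L, hβ₂⟩ := hψ₂ _ b' hcB hb' M' hM' β₁ hβ₁L
    refine ⟨β₂, hβ₂L, ?_⟩
    rw [hβ₂, hβ₁]
    have e : (eqToHom ha ≫ ψ₁ ≫ eqToHom hcB.symm) ≫ eqToHom hcB ≫ ψ₂ ≫ eqToHom hb'.symm
        = eqToHom ha ≫ (ψ₁ ≫ ψ₂) ≫ eqToHom hb'.symm := by
      simp [Category.assoc, eqToHom_trans_assoc, eqToHom_refl]
    exact (Category.assoc _ _ _).trans (congrArg (γ.map α ≫ ·) e)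
  have hP1 : ∀ ⦃x y : C⦄ (f : x ⟶ y), P₀ (W.Q.map f) := by
    intro x y f a b ha hb M' hM' α hα
    obtain rfl : a = x := (objEquiv W).injective ha
    obtain rfl : b = y := (objEquiv W).injective hb
    refine ⟨α ≫ S.Q.map f, ?_, ?_⟩
    · intro Y' w' hw'
      obtain ⟨N, ε, hN, hε⟩ := h3 a
      obtain ⟨g₀, hg₀⟩ := hα ε hε
      obtain ⟨u, hu⟩ := h1 w' hw' N hN (ε ≫ f)
      refine ⟨g₀ ≫ u, ?_⟩
      rw [Category.assoc, hu, S.Q.map_comp, ← Category.assoc, hg₀]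
    · simp only [show ha = rfl from rfl, show hb = rfl from rfl, eqToHom_refl,
        Category.comp_id, Category.id_comp, Functor.map_comp]
      rfl
  have hP2 : ∀ ⦃x y : C⦄ (w : x ⟶ y) (hw : W w), P₀ (wInv w hw) := by
    intro x y w hw a b ha hb M' hM' α hα
    obtain rfl : a = y := (objEquiv W).injective ha
    obtain rfl : b = x := (objEquiv W).injective hb
    obtain ⟨β, hβ⟩ := hα w hw
    refine ⟨β, ?_, ?_⟩
    · intro Y' w' hw'
      obtain ⟨g, hg⟩ := hα (w' ≫ w) (hsw.comp_W _ _ hw' hw)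
      refine ⟨g, h2 w hw M' hM' ?_⟩
      show (g ≫ S.Q.map w') ≫ S.Q.map w = β ≫ S.Q.map w
      rw [Category.assoc, ← S.Q.map_comp, hg, hβ]
    · simp only [show ha = rfl from rfl, show hb = rfl from rfl, eqToHom_refl,
        Category.comp_id, Category.id_comp]
      have e : γ.map β ≫ W.Q.map w = γ.map α :=
        (Functor.map_comp γ β (S.Q.map w)).symm.trans (congrArg γ.map hβ)
      have e2 : (wIso w hw).inv = eqToHom ha ≫ wInv w hw := by
        rw [eqToHom_refl, Category.id_comp]
      exact ((Iso.eq_comp_inv (wIso w hw)).2 e).trans (congrArg (γ.map α ≫ ·) e2)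
  have htop := @morphismProperty_eq_top _ _ W P₀ instU hP1 hP2
  have hψ : P₀ ψ := by rw [htop]; exact MorphismProperty.top_apply _
  have hid : LiftP S W (𝟙 (S.Q.obj M)) := by
    intro Y w hw
    obtain ⟨g, hg⟩ := h1 w hw M hM (𝟙 M)
    exact ⟨g, hg.trans (S.Q.map_id M)⟩
  obtain ⟨β, hL, hβ⟩ := hψ M X rfl rfl M hM (𝟙 (S.Q.obj M)) hid
  refine ⟨β, hL, ?_⟩
  simp at hβ
  exact hβ.trans (by erw [eqToHom_refl]; exact Category.id_comp ψ)

/-- Key injectivity lemma. -/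
lemma lemInj
    (h1 : ∀ ⦃Y X : C⦄ (w : Y ⟶ X), W w → ∀ (M : C), P M → ∀ f : M ⟶ X,
      ∃ g : S.Q.obj M ⟶ S.Q.obj Y, g ≫ S.Q.map w = S.Q.map f)
    (h2 : ∀ ⦃Y X : C⦄ (w : Y ⟶ X), W w → ∀ (M : C), P M →
      Function.Injective (fun g : S.Q.obj M ⟶ S.Q.obj Y => g ≫ S.Q.map w))
    (h3 : ∀ X : C, ∃ (M : C) (ε : M ⟶ X), P M ∧ W ε)
    (M : C) (hM : P M) (X : C) {β₁ β₂ : S.Q.obj M ⟶ S.Q.obj X}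
    (h : (gammaPrime S W hsw.le_sat).map β₁ = (gammaPrime S W hsw.le_sat).map β₂) :
    β₁ = β₂ := by
  classical
  set γ := gammaPrime S W hsw.le_sat with hγ
  choose mod modε hmod using h3
  have inj : ∀ (N : C), P N → ∀ ⦃Y X' : C⦄ (w : Y ⟶ X'), W w →
      ∀ {g g' : S.Q.obj N ⟶ S.Q.obj Y},
      g ≫ S.Q.map w = g' ≫ S.Q.map w → g = g' :=
    fun N hN _ _ w hw _ _ hgg => h2 w hw N hN hgg
  have huex : ∀ (x y : C) (f : x ⟶ y), ∃ u : S.Q.obj (mod x) ⟶ S.Q.obj (mod y),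
      u ≫ S.Q.map (modε y) = S.Q.map (modε x ≫ f) :=
    fun x y f => h1 (modε y) (hmod y).2 (mod x) (hmod x).1 (modε x ≫ f)
  choose u hu using huex
  have hu' : ∀ (x y : C) (f : x ⟶ y) {Z : S.Localization} (k : S.Q.obj y ⟶ Z),
      u x y f ≫ S.Q.map (modε y) ≫ k = S.Q.map (modε x ≫ f) ≫ k := by
    intro x y f Z k
    rw [← Category.assoc, hu]
  let F : C ⥤ Type (max u v) :=
    { obj := fun x => S.Q.obj M ⟶ S.Q.obj (mod x)
      map := fun {x y} f => TypeCat.ofHom (fun g => g ≫ u x y f)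
      map_id := fun x => by
        ext g
        show g ≫ u x x (𝟙 x) = g
        refine inj M hM (modε x) (hmod x).2 ?_
        rw [Category.assoc, hu, Category.comp_id]
      map_comp := fun {x y z} f g => by
        ext t
        show t ≫ u x z (f ≫ g) = (t ≫ u x y f) ≫ u y z g
        refine inj M hM (modε z) (hmod z).2 ?_
        simp only [Category.assoc, hu, hu', Functor.map_comp] }
  have hF : W.IsInvertedBy F := by
    intro x y w hw
    rw [CategoryTheory.isIso_iff_bijective]
    constructor
    · intro g g' hgg
      have hgg' : g ≫ u x y w = g' ≫ u x y w := hgg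
      refine inj M hM (modε x ≫ w) (hsw.comp_W _ _ (hmod x).2 hw) ?_
      have e1 : g ≫ u x y w ≫ S.Q.map (modε y) = g ≫ S.Q.map (modε x ≫ w) := by
        rw [hu]
      have e2 : g' ≫ u x y w ≫ S.Q.map (modε y) = g' ≫ S.Q.map (modε x ≫ w) := by
        rw [hu]
      rw [← e1, ← e2, ← Category.assoc, ← Category.assoc, hgg']
    · intro g'
      obtain ⟨v, hv⟩ := h1 (modε x ≫ w) (hsw.comp_W _ _ (hmod x).2 hw)
        (mod y) (hmod y).1 (modε y)
      refine ⟨g' ≫ v, ?_⟩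
      show (g' ≫ v) ≫ u x y w = g'
      refine inj M hM (modε y) (hmod y).2 ?_
      simp only [Category.assoc, hu, hv]
  let Fbar := Localization.Construction.lift F hF
  have fact1 : ∀ {x y : C} (f : x ⟶ y) (g : S.Q.obj M ⟶ S.Q.obj (mod x)),
      (Fbar.map (W.Q.map f) g : S.Q.obj M ⟶ S.Q.obj (mod y)) ≫ S.Q.map (modε y)
        = (g ≫ S.Q.map (modε x)) ≫ S.Q.map f := by
    intro x y f g
    show (g ≫ u x y f) ≫ S.Q.map (modε y) = _
    rw [Category.assoc, hu, S.Q.map_comp, ← Category.assoc]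
  let U : MorphismProperty S.Localization := fun A B β =>
    ∀ (a b : C) (ha : S.Q.obj a = A) (hb : S.Q.obj b = B)
      (g : S.Q.obj M ⟶ S.Q.obj (mod a)),
      (Fbar.map (γ.map (eqToHom ha ≫ β ≫ eqToHom hb.symm)) g :
          S.Q.obj M ⟶ S.Q.obj (mod b)) ≫ S.Q.map (modε b)
        = (g ≫ S.Q.map (modε a)) ≫ (eqToHom ha ≫ β ≫ eqToHom hb.symm)
  have instU : U.IsStableUnderComposition := by
    constructor
    intro A B B' ψ₁ ψ₂ hψ₁ hψ₂ a b' ha hb' g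
    have hcB : S.Q.obj ((objEquiv S).symm B) = B := (objEquiv S).right_inv B
    have key : eqToHom ha ≫ (ψ₁ ≫ ψ₂) ≫ eqToHom hb'.symm
        = (eqToHom ha ≫ ψ₁ ≫ eqToHom hcB.symm) ≫ (eqToHom hcB ≫ ψ₂ ≫ eqToHom hb'.symm) := by
      simp
    have e1 := hψ₁ a _ ha hcB g
    have e2 := hψ₂ _ b' hcB hb'
      (Fbar.map (γ.map (eqToHom ha ≫ ψ₁ ≫ eqToHom hcB.symm)) g)
    rw [key, Functor.map_comp, Functor.map_comp]
    exact e2.trans ((congrArg (· ≫ _) e1).trans (Category.assoc _ _ _))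
  have hP1 : ∀ ⦃x y : C⦄ (f : x ⟶ y), U (S.Q.map f) := by
    intro x y f a b ha hb g
    obtain rfl : a = x := (objEquiv S).injective ha
    obtain rfl : b = y := (objEquiv S).injective hb
    simp only [show ha = rfl from rfl, show hb = rfl from rfl, eqToHom_refl,
      Category.comp_id, Category.id_comp]
    exact fact1 f g
  have hP2 : ∀ ⦃x y : C⦄ (s : x ⟶ y) (hs : S s), U (wInv s hs) := by
    intro x y s hs a b ha hb g
    obtain rfl : a = y := (objEquiv S).injective ha
    obtain rfl : b = x := (objEquiv S).injective hb
    simp only [show ha = rfl from rfl, show hb = rfl from rfl, eqToHom_refl,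
      Category.comp_id, Category.id_comp]
    rw [Iso.eq_comp_inv]
    show (Fbar.map (γ.map (wInv s hs)) g ≫ S.Q.map (modε b)) ≫ S.Q.map s
      = g ≫ S.Q.map (modε a)
    have hc : γ.map (wInv s hs) ≫ W.Q.map s = 𝟙 _ := by
      show γ.map ((wIso s hs).inv) ≫ γ.map ((wIso s hs).hom) = 𝟙 _
      rw [← γ.map_comp, Iso.inv_hom_id, γ.map_id]
    have hgg : Fbar.map (W.Q.map s) (Fbar.map (γ.map (wInv s hs)) g) = g := by
      have hcc : Fbar.map (γ.map (wInv s hs)) ≫ Fbar.map (W.Q.map s) = 𝟙 _ := by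
        exact (Fbar.map_comp _ _).symm.trans ((congrArg Fbar.map hc).trans (Fbar.map_id _))
      exact (types_comp_apply _ _ g).symm.trans ((congrArg (fun k => k g) hcc).trans (types_id_apply _ g))
    exact (fact1 s _).symm.trans (congrArg (· ≫ S.Q.map (modε a)) hgg)
  have htop := @morphismProperty_eq_top _ _ S U instU hP1 hP2
  -- canonical element
  obtain ⟨eM, heM0⟩ := h1 (modε M) (hmod M).2 M hM (𝟙 M)
  have heM : eM ≫ S.Q.map (modε M) = 𝟙 _ := heM0.trans (S.Q.map_id M)
  have key : ∀ β : S.Q.obj M ⟶ S.Q.obj X,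
      (Fbar.map (γ.map β) eM : S.Q.obj M ⟶ S.Q.obj (mod X)) ≫ S.Q.map (modε X) = β := by
    intro β
    have hUβ : U β := by rw [htop]; exact MorphismProperty.top_apply _
    have := hUβ M X rfl rfl eM
    simp only [eqToHom_refl, Category.comp_id, Category.id_comp] at this
    rw [this, heM, Category.id_comp]
  rw [← key β₁, ← key β₂, h]

end Aux

/-- Suppose `M` is a full subcategory (given by a predicate `P`) such that:
(i) morphisms of `C` from objects of `M` lift along weak equivalences up to strong
equivalence; (ii) composition with weak equivalences is injective on `C[S⁻¹]`-morphisms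
from objects of `M`; and (iii) every object receives a weak equivalence from an object of
`M`. Then every object of `M` is cofibrant, `(C, S, W)` is a left Cartan-Eilenberg
category, and the functor `M[S⁻¹, C] ⥤ C[W⁻¹]` is an equivalence of categories. -/
theorem theoremF (S W : MorphismProperty C) (hsw : StrongWeak S W) (P : C → Prop)
    (h1 : ∀ ⦃Y X : C⦄ (w : Y ⟶ X), W w → ∀ (M : C), P M → ∀ f : M ⟶ X,
      ∃ g : S.Q.obj M ⟶ S.Q.obj Y, g ≫ S.Q.map w = S.Q.map f)
    (h2 : ∀ ⦃Y X : C⦄ (w : Y ⟶ X), W w → ∀ (M : C), P M →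
      Function.Injective (fun g : S.Q.obj M ⟶ S.Q.obj Y => g ≫ S.Q.map w))
    (h3 : ∀ X : C, ∃ (M : C) (ε : M ⟶ X), P M ∧ W ε) :
    (∀ M : C, P M → Cofibrant S W M) ∧
    LeftCE S W hsw.le_sat ∧
    ((inducedFunctor (fun M : {M : C // P M} => S.Q.obj M.1) ⋙
        gammaPrime S W hsw.le_sat).IsEquivalence) := by
  have cof : ∀ M : C, P M → Cofibrant S W M := by
    intro M hM Y X w hw
    refine ⟨h2 w hw M hM, ?_⟩
    intro φ
    haveI : IsIso (W.Q.map w) := W.Q_inverts w hw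
    obtain ⟨β, _, hβ⟩ := lemL S W hsw P h1 h2 h3 M hM Y
      ((gammaPrime S W hsw.le_sat).map φ ≫ (Localization.Construction.wIso w hw).inv)
    refine ⟨β, ?_⟩
    show β ≫ S.Q.map w = φ
    apply lemInj S W hsw P h1 h2 h3 M hM X
    rw [Functor.map_comp, hβ, gmap S W hsw.le_sat w]
    exact (Category.assoc _ _ _).trans ((congrArg ((gammaPrime S W hsw.le_sat).map φ ≫ ·)
      (Localization.Construction.wIso w hw).inv_hom_id).trans (Category.comp_id _))
  refine ⟨cof, ?_, ?_⟩
  · intro X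
    obtain ⟨N, ε, hN, hε⟩ := h3 X
    exact ⟨N, S.Q.map ε, cof N hN, W.Q_inverts ε hε⟩
  · refine { faithful := ⟨?_⟩, full := ⟨?_⟩, essSurj := ⟨?_⟩ }
    · intro X Y f g hfg
      exact InducedCategory.hom_ext (lemInj S W hsw P h1 h2 h3 X.1 X.2 Y.1 hfg)
    · intro X Y ψ
      obtain ⟨β, _, hβ⟩ := lemL S W hsw P h1 h2 h3 X.1 X.2 Y.1 ψ
      exact ⟨InducedCategory.homMk β, hβ⟩
    · intro B
      obtain ⟨⟨b⟩⟩ := B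
      obtain ⟨N, ε, hN, hε⟩ := h3 b
      exact ⟨⟨N, hN⟩, ⟨Localization.Construction.wIso ε hε⟩⟩
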